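/- Let ϑ be a primitive compatible random substitution whose subshift X_ϑ contains a periodic point. Then every entry of the ℓ¹-normalised right Perron–Frobenius eigenvector of the substitution matrix is rational, and the Perron–Frobenius eigenvalue λ is a positive integer. -/

import Mathlib

open List

variable {A : Type*}

/-- Extension of a random substitution to words, by concatenation. -/
def substWord (θ : A → Set (List A)) : List A → Set (List A)
  | [] => {[]}
  | a :: u => {w | ∃ x ∈ θ a, ∃ y ∈ substWord θ u, w = x ++ y}

/-- The set of realisations of `θ^k` on a word. -/
def substPowWord (θ : A → Set (List A)) : ℕ → List A → Set (List A)
  | 0, u => {u}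
  | (k+1), u => ⋃ v ∈ substPowWord θ k u, substWord θ v

/-- The power `θ^k` as a random substitution. -/
def powSub (θ : A → Set (List A)) (k : ℕ) : A → Set (List A) :=
  fun a => substPowWord θ k [a]

/-- `θ` is a (finite range) random substitution: every letter has a nonempty
finite set of realisations, all of which are nonempty words. -/
def RandomSubstitution (θ : A → Set (List A)) : Prop :=
  ∀ a : A, (θ a).Nonempty ∧ (θ a).Finite ∧ ∀ w ∈ θ a, w ≠ []

/-- A word is `θ`-legal if it is a subword of a realisation of some power of
`θ` on some letter. -/
def IsLegal (θ : A → Set (List A)) (u : List A) : Prop :=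
  ∃ k : ℕ, ∃ a : A, ∃ w ∈ substPowWord θ k [a], u <:+: w

/-- `θ` has disjoint images. -/
def HasDisjointImages (θ : A → Set (List A)) : Prop :=
  ∀ u v : List A, IsLegal θ u → IsLegal θ v →
    (substWord θ u ∩ substWord θ v).Nonempty → u = v

/-- `θ` has constant length `ℓ`. -/
def ConstantLength (θ : A → Set (List A)) (ℓ : ℕ) : Prop :=
  ∀ a : A, ∀ w ∈ θ a, w.length = ℓ

/-- `θ` is compatible: abelianisations of realisations are well defined. -/
def Compatible [DecidableEq A] (θ : A → Set (List A)) : Prop :=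
  ∀ a : A, ∀ u ∈ θ a, ∀ v ∈ θ a, ∀ b : A, u.count b = v.count b

/-- `θ` is primitive. -/
def Primitive (θ : A → Set (List A)) : Prop :=
  ∃ k : ℕ, ∀ a b : A, ∃ w ∈ substPowWord θ k [a], b ∈ w

/-- The finite subword of a bi-infinite sequence starting at `i`, of length `n`. -/
def extract (x : ℤ → A) (i : ℤ) (n : ℕ) : List A :=
  (List.range n).map fun j => x (i + j)

/-- The RS-subshift of `θ`: bi-infinite sequences all of whose subwords are legal. -/
def Subshift (θ : A → Set (List A)) : Set (ℤ → A) :=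
  {x | ∀ i : ℤ, ∀ n : ℕ, IsLegal θ (extract x i n)}

/-- `x` is a realisation-wise image of `y` under `θ`: there is a decomposition
of `x` into consecutive inflation words, with a cut at the origin, the `n`-th
of which is a realisation of `θ` on `y n`. -/
def SeqImage (θ : A → Set (List A)) (y x : ℤ → A) : Prop :=
  ∃ c : ℤ → ℤ, c 0 = 0 ∧ (∀ n : ℤ, c n < c (n + 1)) ∧
    ∀ n : ℤ, extract x (c n) (c (n + 1) - c n).toNat ∈ θ (y n)

/-- `θ` is globally uniquely recognisable. -/
def GloballyUniquelyRecognisable (θ : A → Set (List A)) : Prop :=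
  ∀ x ∈ Subshift θ, ∃! y : ℤ → A, y ∈ Subshift θ ∧
    ∃ k : ℕ, (∃ w ∈ θ (y 0), k < w.length) ∧ SeqImage θ y (fun n => x (n - k))

/-- `x` has period `p` (as a natural number, acting on indices in `ℤ`). -/
def HasPeriod (x : ℤ → A) (p : ℕ) : Prop :=
  ∀ n : ℤ, x (n + p) = x n

/-- `x` is shift-periodic. -/
def IsPeriodic (x : ℤ → A) : Prop :=
  ∃ p : ℕ, 0 < p ∧ HasPeriod x p

/-- `p` is the prime (least) period of `x`. -/
def PrimePeriod (x : ℤ → A) (p : ℕ) : Prop :=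
  0 < p ∧ HasPeriod x p ∧ ∀ q : ℕ, 0 < q → HasPeriod x q → p ≤ q

/-- `u` is a periodic block for `x`: up to shift, `x` is the bi-infinite
repetition of `u`. -/
def PeriodicBlock (u : List A) (x : ℤ → A) : Prop :=
  u ≠ [] ∧ ∃ i : ℤ, ∀ n : ℤ, extract x (i + n * u.length) u.length = u

section Part1
variable [Fintype A] [DecidableEq A]

def Mpow (M : A → A → ℕ) : ℕ → A → A → ℕ
  | 0 => fun a b => if a = b then 1 else 0
  | (k+1) => fun a b => ∑ c, M a c * Mpow M k c b

lemma mem_substPow_succ {θ : A → Set (List A)} {k u w} :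
    w ∈ substPowWord θ (k+1) u ↔ ∃ v ∈ substPowWord θ k u, w ∈ substWord θ v := by
  simp [substPowWord]

lemma substPowWord_nil {θ : A → Set (List A)} (k : ℕ) {w : List A} :
    w ∈ substPowWord θ k ([] : List A) ↔ w = [] := by
  induction k generalizing w with
  | zero => simp [substPowWord]
  | succ k ih =>
    rw [mem_substPow_succ]
    constructor
    · rintro ⟨v, hv, hw⟩
      rw [ih] at hv; subst hv
      simpa [substWord] using hw
    · rintro rfl
      exact ⟨[], ih.mpr rfl, by simp [substWord]⟩

lemma substWord_append {θ : A → Set (List A)} (u v : List A) (w : List A) :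
    w ∈ substWord θ (u ++ v) ↔
      ∃ x ∈ substWord θ u, ∃ y ∈ substWord θ v, w = x ++ y := by
  induction u generalizing w with
  | nil =>
    simp [substWord]
  | cons b u ih =>
    constructor
    · rintro ⟨x, hx, y, hy, rfl⟩
      rcases (ih y).mp hy with ⟨y1, hy1, y2, hy2, rfl⟩
      exact ⟨x ++ y1, ⟨x, hx, y1, hy1, rfl⟩, y2, hy2, by simp⟩
    · rintro ⟨x, ⟨x1, hx1, x2, hx2, rfl⟩, y, hy, rfl⟩
      exact ⟨x1, hx1, x2 ++ y, (ih _).mpr ⟨x2, hx2, y, hy, rfl⟩, by simp⟩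

lemma substPow_append {θ : A → Set (List A)} (k : ℕ) (u v : List A) (w : List A) :
    w ∈ substPowWord θ k (u ++ v) ↔
      ∃ x ∈ substPowWord θ k u, ∃ y ∈ substPowWord θ k v, w = x ++ y := by
  induction k generalizing w with
  | zero => simp [substPowWord]
  | succ k ih =>
    rw [mem_substPow_succ]
    constructor
    · rintro ⟨z, hz, hw⟩
      rcases (ih z).mp hz with ⟨x, hx, y, hy, rfl⟩
      rcases (substWord_append x y w).mp hw with ⟨x', hx', y', hy', rfl⟩
      exact ⟨x', mem_substPow_succ.mpr ⟨x, hx, hx'⟩, y',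
        mem_substPow_succ.mpr ⟨y, hy, hy'⟩, rfl⟩
    · rintro ⟨x', hx1, y', hy1, rfl⟩
      rw [mem_substPow_succ] at hx1 hy1
      obtain ⟨x0, hx0, hx'⟩ := hx1
      obtain ⟨y0, hy0, hy'⟩ := hy1
      exact ⟨x0 ++ y0, (ih _).mpr ⟨x0, hx0, y0, hy0, rfl⟩,
        (substWord_append x0 y0 _).mpr ⟨x', hx', y', hy', rfl⟩⟩

lemma substPow_add {θ : A → Set (List A)} (j k : ℕ) (u : List A) (w : List A) :
    w ∈ substPowWord θ (j + k) u ↔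
      ∃ z ∈ substPowWord θ j u, w ∈ substPowWord θ k z := by
  induction k generalizing w with
  | zero => simp [substPowWord]
  | succ k ih =>
    rw [show j + (k+1) = (j + k) + 1 from rfl, mem_substPow_succ]
    constructor
    · rintro ⟨v, hv, hw⟩
      rcases (ih v).mp hv with ⟨z, hz, hv'⟩
      exact ⟨z, hz, mem_substPow_succ.mpr ⟨v, hv', hw⟩⟩
    · rintro ⟨z, hz, hw⟩
      rw [mem_substPow_succ] at hw
      obtain ⟨v, hv, hw⟩ := hw
      exact ⟨v, (ih v).mpr ⟨z, hz, hv⟩, hw⟩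

variable {θ : A → Set (List A)} {M : A → A → ℕ}

lemma count_substWord (hM : ∀ b : A, ∀ u ∈ θ b, ∀ a : A, u.count a = M a b) :
    ∀ (u : List A), ∀ w ∈ substWord θ u, ∀ a, w.count a = ∑ b, M a b * u.count b := by
  intro u
  induction u with
  | nil =>
    rintro w hw a
    simp [substWord] at hw
    simp [hw]
  | cons b u ih =>
    rintro w ⟨x, hx, y, hy, rfl⟩ a
    rw [List.count_append, hM b x hx a, ih y hy a]
    have : ∀ c : A, (b :: u).count c = u.count c + if b = c then 1 else 0 := by
      intro c; simp [List.count_cons]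
    simp only [this, Nat.mul_add, Finset.sum_add_distrib, mul_ite, mul_one, mul_zero,
      Finset.sum_ite_eq Finset.univ b, Finset.mem_univ, if_true]
    omega

lemma count_substPow (hM : ∀ b : A, ∀ u ∈ θ b, ∀ a : A, u.count a = M a b) :
    ∀ (k : ℕ) (u : List A), ∀ w ∈ substPowWord θ k u, ∀ a,
      w.count a = ∑ b, Mpow M k a b * u.count b := by
  intro k
  induction k with
  | zero =>
    intro u w hw a
    simp [substPowWord] at hw
    subst hw
    simp [Mpow, ite_mul, Finset.sum_ite_eq Finset.univ a]
  | succ k ih =>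
    intro u w hw a
    rcases mem_substPow_succ.mp hw with ⟨v, hv, hw⟩
    rw [count_substWord hM v w hw a]
    have : ∀ c, v.count c = ∑ b, Mpow M k c b * u.count b := fun c => ih u v hv c
    simp only [this, Finset.mul_sum, Mpow]
    rw [Finset.sum_comm]
    congr 1; funext b
    rw [Finset.sum_mul]
    congr 1; funext c
    ring

lemma length_eq_sum_count (w : List A) : w.length = ∑ a, w.count a := by
  induction w with
  | nil => simp
  | cons b w ih =>
    have : ∀ a : A, (b :: w).count a = w.count a + if b = a then 1 else 0 := by
      intro a; simp [List.count_cons]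
    simp only [this, Finset.sum_add_distrib, Finset.sum_ite_eq Finset.univ b,
      Finset.mem_univ, if_true, List.length_cons, ih]

/-- column sums of `Mpow`, i.e. the common length of level-`k` inflation words. -/
def colsum (M : A → A → ℕ) (k : ℕ) (b : A) : ℕ := ∑ c, Mpow M k c b

lemma count_substPow_letter (hM : ∀ b : A, ∀ u ∈ θ b, ∀ a : A, u.count a = M a b)
    (k : ℕ) (b : A) (w : List A) (hw : w ∈ substPowWord θ k [b]) (a : A) :
    w.count a = Mpow M k a b := by
  rw [count_substPow hM k [b] w hw a]
  have : ∀ c : A, List.count c [b] = if c = b then 1 else 0 := by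
    intro c; simp [List.count_singleton', eq_comm]
  simp [this, mul_ite, Finset.sum_ite_eq' Finset.univ b]

lemma length_substPow_letter (hM : ∀ b : A, ∀ u ∈ θ b, ∀ a : A, u.count a = M a b)
    (k : ℕ) (b : A) (w : List A) (hw : w ∈ substPowWord θ k [b]) :
    w.length = colsum M k b := by
  rw [length_eq_sum_count w, colsum]
  exact Finset.sum_congr rfl fun a _ => count_substPow_letter hM k b w hw a

lemma length_substPow (hM : ∀ b : A, ∀ u ∈ θ b, ∀ a : A, u.count a = M a b)
    (k : ℕ) (u : List A) (w : List A) (hw : w ∈ substPowWord θ k u) :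
    w.length = ∑ b, colsum M k b * u.count b := by
  rw [length_eq_sum_count w]
  have : ∀ a, w.count a = ∑ b, Mpow M k a b * u.count b := count_substPow hM k u w hw
  simp only [this, colsum]
  rw [Finset.sum_comm]
  congr 1; funext b
  rw [Finset.sum_mul]

end Part1

section Part2
variable [Fintype A] [DecidableEq A] {θ : A → Set (List A)} {M : A → A → ℕ}

/-- total length of all level-`k` inflation words -/
def Tlen (M : A → A → ℕ) [Fintype A] [DecidableEq A] (k : ℕ) : ℕ := ∑ b, colsum M k b

lemma colsum_le_Tlen (k : ℕ) (b : A) : colsum M k b ≤ Tlen M k :=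
  Finset.single_le_sum (fun c _ => Nat.zero_le _) (Finset.mem_univ b)

lemma prefix_decomp (hM : ∀ b : A, ∀ u ∈ θ b, ∀ a : A, u.count a = M a b) (k : ℕ) :
    ∀ (z : List A), ∀ w ∈ substPowWord θ k z, ∀ t, t <+: w →
      ∃ z₂ m r, m ∈ substPowWord θ k z₂ ∧ t = m ++ r ∧ r.length ≤ Tlen M k := by
  intro z
  induction z with
  | nil =>
    intro w hw t ht
    simp [substPowWord_nil] at hw
    subst hw
    rw [List.prefix_nil] at ht
    exact ⟨[], [], [], by simp [substPowWord_nil], by simp [ht], by simp⟩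
  | cons b z ih =>
    intro w hw t ht
    rcases (substPow_append k [b] z w).mp hw with ⟨x, hx, y, hy, rfl⟩
    by_cases hlen : t.length ≤ x.length
    · have hx' : x <+: x ++ y := ⟨y, rfl⟩
      have htx : t <+: x := List.prefix_of_prefix_length_le ht hx' hlen
      refine ⟨[], [], t, by simp [substPowWord_nil], by simp, ?_⟩
      have : x.length = colsum M k b := length_substPow_letter hM k b x hx
      calc t.length ≤ x.length := hlen
        _ ≤ Tlen M k := by rw [this]; exact colsum_le_Tlen k b
    · push_neg at hlen
      have hx' : x <+: x ++ y := ⟨y, rfl⟩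
      have hxt : x <+: t := List.prefix_of_prefix_length_le hx' ht (le_of_lt hlen)
      obtain ⟨t', rfl⟩ := hxt
      have ht' : t' <+: y := by
        obtain ⟨d, hd⟩ := ht
        rw [List.append_assoc] at hd
        exact ⟨d, List.append_cancel_left hd⟩
      obtain ⟨z₂, m, r, hm, rfl, hr⟩ := ih y hy t' ht'
      exact ⟨b :: z₂, x ++ m, r,
        (substPow_append k [b] z₂ _).mpr ⟨x, hx, m, hm, rfl⟩, by simp, hr⟩

lemma suffix_decomp (hM : ∀ b : A, ∀ u ∈ θ b, ∀ a : A, u.count a = M a b) (k : ℕ) :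
    ∀ (z : List A), ∀ w ∈ substPowWord θ k z, ∀ t, t <:+ w →
      ∃ z₂ m r, m ∈ substPowWord θ k z₂ ∧ t = r ++ m ∧ r.length ≤ Tlen M k := by
  intro z
  induction z with
  | nil =>
    intro w hw t ht
    simp [substPowWord_nil] at hw
    subst hw
    rw [List.suffix_nil] at ht
    exact ⟨[], [], [], by simp [substPowWord_nil], by simp [ht], by simp⟩
  | cons b z ih =>
    intro w hw t ht
    rcases (substPow_append k [b] z w).mp hw with ⟨x, hx, y, hy, rfl⟩
    by_cases hlen : t.length ≤ y.length
    · have hy' : y <:+ x ++ y := ⟨x, rfl⟩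
      have hty : t <:+ y := List.suffix_of_suffix_length_le ht hy' hlen
      exact ih y hy t hty
    · push_neg at hlen
      have hy' : y <:+ x ++ y := ⟨x, rfl⟩
      have hyt : y <:+ t := List.suffix_of_suffix_length_le hy' ht (le_of_lt hlen)
      obtain ⟨r, rfl⟩ := hyt
      refine ⟨z, y, r, hy, rfl, ?_⟩
      have hrx : r <:+: x := by
        obtain ⟨d, hd⟩ := ht
        have : d ++ r = x := by
          have h2 : (d ++ r) ++ y = x ++ y := by rw [← hd]; simp
          exact List.append_cancel_right h2
        exact ⟨d, [], by simp [this]⟩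
      have : x.length = colsum M k b := length_substPow_letter hM k b x hx
      calc r.length ≤ x.length := hrx.length_le
        _ ≤ Tlen M k := by rw [this]; exact colsum_le_Tlen k b
end Part2

section Part3
variable [Fintype A] [DecidableEq A] {θ : A → Set (List A)} {M : A → A → ℕ}

/-- slack constant for the level-`k` frequency bound -/
def Cst (M : A → A → ℕ) [Fintype A] [DecidableEq A] (k : ℕ) : ℕ :=
  2 * Tlen M k + ∑ m ∈ Finset.range k, Tlen M m

lemma trivial_lower (γ : ℝ) (hγ : γ ≤ 1) (s : List A) (k : ℕ)
    (hs : (s.length : ℝ) ≤ (Cst M k : ℝ)) :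
    γ * s.length - (Cst M k : ℝ) ≤ (s.count a : ℝ) := by
  have h1 : γ * (s.length : ℝ) ≤ (s.length : ℝ) := by
    have := mul_le_mul_of_nonneg_right hγ (show (0:ℝ) ≤ (s.length : ℝ) by positivity)
    simpa using this
  have h2 : (0:ℝ) ≤ (s.count a : ℝ) := by positivity
  linarith

lemma legal_count_lower (hM : ∀ b : A, ∀ u ∈ θ b, ∀ a : A, u.count a = M a b)
    (k : ℕ) (a : A) (γ : ℝ) (hγ : γ ≤ 1)
    (hcol : ∀ b, γ * (colsum M k b : ℝ) ≤ (Mpow M k a b : ℝ)) :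
    ∀ s : List A, IsLegal θ s →
      γ * s.length - (Cst M k : ℝ) ≤ (s.count a : ℝ) := by
  rintro s ⟨n, c, w, hw, hs⟩
  rcases le_or_gt k n with hkn | hnk
  · -- decompose w into level-k inflation words
    rw [show n = (n - k) + k from (Nat.sub_add_cancel hkn).symm] at hw
    rcases (substPow_add (n - k) k [c] w).mp hw with ⟨z, hz, hwz⟩
    obtain ⟨p, q, hpq⟩ := hs
    have hsq : s ++ q <:+ w := ⟨p, by rw [← hpq]; simp⟩
    obtain ⟨z₁, m1, r, hm1, heq, hr⟩ := suffix_decomp hM k z w hwz (s ++ q) hsq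
    rcases le_or_gt s.length r.length with hsmall | hbig
    · apply trivial_lower γ hγ s k
      have : r.length ≤ Cst M k := le_trans hr (by simp [Cst]; omega)
      have hsle : (s.length : ℝ) ≤ (r.length : ℝ) := by exact_mod_cast hsmall
      calc (s.length : ℝ) ≤ (r.length : ℝ) := hsle
        _ ≤ (Cst M k : ℝ) := by exact_mod_cast this
    · -- r is a prefix of s
      have hrs : r <+: s := by
        have h1 : r <+: s ++ q := ⟨m1, heq.symm⟩
        have h2 : s <+: s ++ q := ⟨q, rfl⟩
        exact List.prefix_of_prefix_length_le h1 h2 (le_of_lt hbig)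
      obtain ⟨s₀, rfl⟩ := hrs
      have hs₀ : s₀ ++ q = m1 := by
        rw [List.append_assoc] at heq
        exact List.append_cancel_left heq
      have hs₀m1 : s₀ <+: m1 := ⟨q, hs₀⟩
      obtain ⟨z₂, m2, r', hm2, rfl, hr'⟩ := prefix_decomp hM k z₁ m1 hm1 s₀ hs₀m1
      -- count bound on m2
      have hcnt : (m2.count a : ℝ) = ∑ b, (Mpow M k a b : ℝ) * (z₂.count b : ℝ) := by
        rw [count_substPow hM k z₂ m2 hm2 a]
        push_cast
        rfl
      have hlen : (m2.length : ℝ) = ∑ b, (colsum M k b : ℝ) * (z₂.count b : ℝ) := by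
        rw [length_substPow hM k z₂ m2 hm2]
        push_cast
        rfl
      have key : γ * (m2.length : ℝ) ≤ (m2.count a : ℝ) := by
        rw [hcnt, hlen, Finset.mul_sum]
        apply Finset.sum_le_sum
        intro b _
        rw [← mul_assoc]
        exact mul_le_mul_of_nonneg_right (hcol b) (by positivity)
      have hcle : (m2.count a : ℝ) ≤ ((r ++ (m2 ++ r')).count a : ℝ) := by
        have : m2.count a ≤ (r ++ (m2 ++ r')).count a := by
          simp only [List.count_append]
          omega
        exact_mod_cast this
      have hlens : ((r ++ (m2 ++ r')).length : ℝ)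
          = (r.length : ℝ) + (m2.length : ℝ) + (r'.length : ℝ) := by
        push_cast [List.length_append]
        ring
      have hrR : (r.length : ℝ) ≤ (Tlen M k : ℝ) := by exact_mod_cast hr
      have hr'R : (r'.length : ℝ) ≤ (Tlen M k : ℝ) := by exact_mod_cast hr'
      have hCst : (2 * (Tlen M k : ℝ)) ≤ (Cst M k : ℝ) := by
        have : 2 * Tlen M k ≤ Cst M k := by simp [Cst]
        exact_mod_cast this
      have hslack : γ * ((r.length : ℝ) + (r'.length : ℝ))
          ≤ (r.length : ℝ) + (r'.length : ℝ) := by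
        have := mul_le_mul_of_nonneg_right hγ
          (show (0:ℝ) ≤ (r.length : ℝ) + (r'.length : ℝ) by positivity)
        simpa using this
      rw [hlens]
      nlinarith [hrR, hr'R]
  · -- n < k : w itself is short
    apply trivial_lower γ hγ s k
    have h1 : s.length ≤ w.length := hs.length_le
    have h2 : w.length = colsum M n c := length_substPow_letter hM n c w hw
    have h3 : Tlen M n ≤ Cst M k := by
      have : Tlen M n ≤ ∑ m ∈ Finset.range k, Tlen M m :=
        Finset.single_le_sum (f := fun m => Tlen M m)
          (fun m _ => Nat.zero_le _) (Finset.mem_range.mpr hnk)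
      simp [Cst]; omega
    have : s.length ≤ Cst M k := by
      have h4 := colsum_le_Tlen (M := M) n c
      omega
    exact_mod_cast this
end Part3

section Part4
variable [Fintype A] [DecidableEq A]

lemma Mpow_add (M : A → A → ℕ) (j k : ℕ) (a b : A) :
    Mpow M (j + k) a b = ∑ c, Mpow M j a c * Mpow M k c b := by
  induction j generalizing a with
  | zero =>
    simp [Mpow, ite_mul, Finset.sum_ite_eq Finset.univ a, Nat.zero_add]
  | succ j ih =>
    rw [show j + 1 + k = (j + k) + 1 by omega]
    show (∑ d, M a d * Mpow M (j + k) d b) = _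
    have : ∀ d, M a d * Mpow M (j + k) d b
        = ∑ c, M a d * (Mpow M j d c * Mpow M k c b) := by
      intro d; rw [ih d, Finset.mul_sum]
    rw [Finset.sum_congr rfl fun d _ => this d, Finset.sum_comm]
    apply Finset.sum_congr rfl
    intro c _
    show _ = (∑ d, M a d * Mpow M j d c) * Mpow M k c b
    rw [Finset.sum_mul]
    apply Finset.sum_congr rfl
    intro d _
    ring

lemma eig_pow (M : A → A → ℕ) (R : A → ℝ) (lam : ℝ)
    (hEig : ∀ a : A, (∑ b : A, (M a b : ℝ) * R b) = lam * R a) :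
    ∀ (k : ℕ) (a : A), (∑ b : A, (Mpow M k a b : ℝ) * R b) = lam ^ k * R a := by
  intro k
  induction k with
  | zero =>
    intro a
    simp [Mpow, apply_ite (Nat.cast : ℕ → ℝ), ite_mul, Finset.sum_ite_eq Finset.univ a]
  | succ k ih =>
    intro a
    have : ∀ b : A, ((Mpow M (k+1) a b : ℕ) : ℝ) * R b
        = ∑ c, (M a c : ℝ) * ((Mpow M k c b : ℝ) * R b) := by
      intro b
      show ((∑ c, M a c * Mpow M k c b : ℕ) : ℝ) * R b = _
      push_cast
      rw [Finset.sum_mul]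
      apply Finset.sum_congr rfl
      intro c _
      ring
    rw [Finset.sum_congr rfl fun b _ => this b, Finset.sum_comm]
    calc (∑ c, ∑ b, (M a c : ℝ) * ((Mpow M k c b : ℝ) * R b))
        = ∑ c, (M a c : ℝ) * (lam ^ k * R c) := by
          apply Finset.sum_congr rfl
          intro c _
          rw [← Finset.mul_sum, ih c]
      _ = lam ^ k * ∑ c, (M a c : ℝ) * R c := by
          rw [Finset.mul_sum]
          apply Finset.sum_congr rfl
          intro c _
          ring
      _ = lam ^ (k + 1) * R a := by rw [hEig a]; ring

end Part4

section Part5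
variable [Fintype A] [DecidableEq A]

lemma pf_bound [Nonempty A] (M : A → A → ℕ) (R : A → ℝ) (lam : ℝ)
    (hRpos : ∀ a : A, 0 < R a) (hsum : (∑ a : A, R a) = 1)
    (hEig : ∀ a : A, (∑ b : A, (M a b : ℝ) * R b) = lam * R a)
    (hlam : 1 ≤ lam) (k0 : ℕ) (hk0 : ∀ a b : A, 1 ≤ Mpow M k0 a b)
    {ε : ℝ} (hε : 0 < ε) :
    ∃ K : ℕ, ∀ a b : A, (R a - ε) * (colsum M K b : ℝ) ≤ (Mpow M K a b : ℝ) := by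
  have hlampos : (0:ℝ) < lam := lt_of_lt_of_le one_pos hlam
  have hRle1 : ∀ a : A, R a ≤ 1 := by
    intro a
    rw [← hsum]
    exact Finset.single_le_sum (fun c _ => (hRpos c).le) (Finset.mem_univ a)
  set Q : ℕ → A → A → ℝ :=
    fun k a b => (Mpow M k a b : ℝ) * R b / (lam ^ k * R a) with hQdef
  have hDpos : ∀ (k : ℕ) (a : A), (0:ℝ) < lam ^ k * R a := by
    intro k a; exact mul_pos (pow_pos hlampos k) (hRpos a)
  have Qnn : ∀ k a b, 0 ≤ Q k a b := by
    intro k a b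
    have h1 : (0:ℝ) ≤ (Mpow M k a b : ℝ) * R b :=
      mul_nonneg (Nat.cast_nonneg _) (hRpos b).le
    exact div_nonneg h1 (hDpos k a).le
  have Qrow : ∀ k a, ∑ b, Q k a b = 1 := by
    intro k a
    simp only [hQdef]
    rw [← Finset.sum_div, eig_pow M R lam hEig k a, div_self (hDpos k a).ne']
  have Qle1 : ∀ k a b, Q k a b ≤ 1 := by
    intro k a b
    rw [← Qrow k a]
    exact Finset.single_le_sum (fun c _ => Qnn k a c) (Finset.mem_univ b)
  have Qmul : ∀ j k a b, Q (j + k) a b = ∑ c, Q j a c * Q k c b := by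
    intro j k a b
    have hterm : ∀ c, Q j a c * Q k c b
        = (Mpow M j a c : ℝ) * (Mpow M k c b : ℝ) * R b / (lam ^ (j + k) * R a) := by
      intro c
      simp only [hQdef]
      rw [pow_add]
      have hc := (hRpos c).ne'
      have ha := (hRpos a).ne'
      have hl : lam ^ j ≠ 0 := (pow_pos hlampos j).ne'
      have hl' : lam ^ k ≠ 0 := (pow_pos hlampos k).ne'
      field_simp
    rw [Finset.sum_congr rfl fun c _ => hterm c]
    simp only [hQdef]
    rw [← Finset.sum_div, ← Finset.sum_mul, Mpow_add M j k a b]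
    push_cast
    rfl
  -- lower bound δ for entries of Q k0 (and beyond)
  obtain ⟨a0⟩ := (inferInstance : Nonempty A)
  set Rmin : ℝ := Finset.univ.inf' Finset.univ_nonempty R with hRmin
  have hRminpos : 0 < Rmin := by
    rw [hRmin, Finset.lt_inf'_iff]
    exact fun a _ => hRpos a
  have hRminle : ∀ a : A, Rmin ≤ R a := fun a =>
    Finset.inf'_le R (Finset.mem_univ a)
  set δ : ℝ := Rmin / lam ^ k0 with hδdef
  have hδpos : 0 < δ := div_pos hRminpos (pow_pos hlampos k0)
  have hδ : ∀ a b : A, δ ≤ Q k0 a b := by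
    intro a b
    rw [hδdef]
    simp only [hQdef]
    rw [div_le_div_iff₀ (pow_pos hlampos k0) (hDpos k0 a)]
    have h1 : (1:ℝ) ≤ (Mpow M k0 a b : ℝ) := by exact_mod_cast hk0 a b
    have h2 : Rmin ≤ R b := hRminle b
    have h3 : R a ≤ 1 := hRle1 a
    have h4 : (0:ℝ) < lam ^ k0 := pow_pos hlampos k0
    have c1 : Rmin * (lam ^ k0 * R a) ≤ Rmin * lam ^ k0 := by
      nlinarith [mul_nonneg (mul_pos hRminpos h4).le (show (0:ℝ) ≤ 1 - R a by linarith)]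
    have c2 : Rmin * lam ^ k0 ≤ R b * lam ^ k0 :=
      mul_le_mul_of_nonneg_right h2 h4.le
    have c3 : R b * lam ^ k0 ≤ (Mpow M k0 a b : ℝ) * R b * lam ^ k0 := by
      nlinarith [mul_nonneg (mul_pos (hRpos b) h4).le
        (show (0:ℝ) ≤ (Mpow M k0 a b : ℝ) - 1 by linarith)]
    linarith
  have Qlow : ∀ (j : ℕ) (a b : A), δ ≤ Q (j + k0) a b := by
    intro j a b
    rw [Qmul j k0 a b]
    calc δ = ∑ c, Q j a c * δ := by
          rw [← Finset.sum_mul, Qrow j a, one_mul]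
      _ ≤ ∑ c, Q j a c * Q k0 c b :=
          Finset.sum_le_sum fun c _ =>
            mul_le_mul_of_nonneg_left (hδ c b) (Qnn j a c)
  set N : ℕ := Fintype.card A with hN
  set q : ℝ := 1 - N * δ with hqdef
  have hNδ : (N : ℝ) * δ ≤ 1 := by
    have : (∑ _c : A, δ) ≤ ∑ c, Q k0 a0 c :=
      Finset.sum_le_sum fun c _ => hδ a0 c
    rw [Qrow k0 a0] at this
    simpa [Finset.sum_const, hN, nsmul_eq_mul] using this
  have hq0 : 0 ≤ q := by rw [hqdef]; linarith
  have hq1 : q < 1 := by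
    rw [hqdef]
    have hN1 : (1:ℝ) ≤ N := by
      have : 0 < N := Fintype.card_pos
      exact_mod_cast this
    nlinarith
  -- oscillation contraction
  have hosc : ∀ (m : ℕ) (a a' b : A),
      Q (k0 * m + k0) a b - Q (k0 * m + k0) a' b ≤ q ^ m := by
    intro m
    induction m with
    | zero =>
      intro a a' b
      simp only [Nat.mul_zero, Nat.zero_add, pow_zero]
      have := Qle1 k0 a b
      have := Qnn k0 a' b
      linarith
    | succ m ih =>
      intro a a' b
      have hKey : k0 * (m + 1) + k0 = k0 + (k0 * m + k0) := by ring
      rw [hKey, Qmul k0 (k0 * m + k0) a b, Qmul k0 (k0 * m + k0) a' b]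
      set K := k0 * m + k0 with hK
      obtain ⟨c₀, _, hc₀⟩ := Finset.exists_min_image Finset.univ
        (fun c => Q K c b) ⟨a, Finset.mem_univ a⟩
      have step1 : (∑ c, Q k0 a c * Q K c b) - (∑ c, Q k0 a' c * Q K c b)
          = ∑ c, (Q k0 a c - Q k0 a' c) * (Q K c b - Q K c₀ b) := by
        have l1 : (∑ c, (Q k0 a c - Q k0 a' c) * (Q K c b - Q K c₀ b))
            = (∑ c, Q k0 a c * Q K c b) - (∑ c, Q k0 a' c * Q K c b)
              - ((∑ c, Q k0 a c) * Q K c₀ b - (∑ c, Q k0 a' c) * Q K c₀ b) := by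
          rw [Finset.sum_mul, Finset.sum_mul, ← Finset.sum_sub_distrib,
            ← Finset.sum_sub_distrib, ← Finset.sum_sub_distrib]
          apply Finset.sum_congr rfl
          intro c _
          ring
        rw [l1, Qrow, Qrow]
        ring
      rw [step1]
      have step2 : ∀ c : A, (Q k0 a c - Q k0 a' c) * (Q K c b - Q K c₀ b)
          ≤ (Q k0 a c - δ) * q ^ m := by
        intro c
        have hf2nn : 0 ≤ Q K c b - Q K c₀ b := by
          have := hc₀ c (Finset.mem_univ c)
          linarith
        have hf2le : Q K c b - Q K c₀ b ≤ q ^ m := ih c c₀ b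
        have hf1le : Q k0 a c - Q k0 a' c ≤ Q k0 a c - δ := by
          have := hδ a' c
          linarith
        have hf1nn : 0 ≤ Q k0 a c - δ := by
          have := hδ a c
          linarith
        calc (Q k0 a c - Q k0 a' c) * (Q K c b - Q K c₀ b)
            ≤ (Q k0 a c - δ) * (Q K c b - Q K c₀ b) :=
              mul_le_mul_of_nonneg_right hf1le hf2nn
          _ ≤ (Q k0 a c - δ) * q ^ m := mul_le_mul_of_nonneg_left hf2le hf1nn
      calc (∑ c, (Q k0 a c - Q k0 a' c) * (Q K c b - Q K c₀ b))
          ≤ ∑ c, (Q k0 a c - δ) * q ^ m :=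
            Finset.sum_le_sum fun c _ => step2 c
        _ = (1 - N * δ) * q ^ m := by
            rw [← Finset.sum_mul, Finset.sum_sub_distrib, Qrow]
            simp [Finset.sum_const, hN, nsmul_eq_mul]
        _ = q ^ (m + 1) := by rw [← hqdef]; ring
  -- choose m with q ^ m < ε * δ
  obtain ⟨m, hm⟩ := exists_pow_lt_of_lt_one (mul_pos hε hδpos) hq1
  refine ⟨k0 * m + k0, ?_⟩
  intro a b
  set K := k0 * m + k0 with hK
  set s : ℝ := ∑ c, R c * Q K c b with hs
  have hsδ : δ ≤ s := by
    rw [hs]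
    calc δ = ∑ c, R c * δ := by rw [← Finset.sum_mul, hsum, one_mul]
      _ ≤ ∑ c, R c * Q K c b := Finset.sum_le_sum fun c _ =>
          mul_le_mul_of_nonneg_left (Qlow (k0 * m) c b) (hRpos c).le
  have h1 : s - Q K a b ≤ q ^ m := by
    have he : s - Q K a b = ∑ c, R c * (Q K c b - Q K a b) := by
      rw [hs]
      have : ∀ c : A, R c * (Q K c b - Q K a b)
          = R c * Q K c b - R c * Q K a b := fun c => by ring
      rw [Finset.sum_congr rfl fun c _ => this c, Finset.sum_sub_distrib,
        ← Finset.sum_mul, hsum, one_mul]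
    rw [he]
    calc (∑ c, R c * (Q K c b - Q K a b))
        ≤ ∑ c, R c * q ^ m := Finset.sum_le_sum fun c _ =>
          mul_le_mul_of_nonneg_left (hosc m c a b) (hRpos c).le
      _ = q ^ m := by rw [← Finset.sum_mul, hsum, one_mul]
  have h2 : R a * (s - Q K a b) ≤ q ^ m := by
    have hqm : (0:ℝ) ≤ q ^ m := pow_nonneg hq0 m
    calc R a * (s - Q K a b) ≤ R a * q ^ m :=
          mul_le_mul_of_nonneg_left h1 (hRpos a).le
      _ ≤ 1 * q ^ m := mul_le_mul_of_nonneg_right (hRle1 a) hqm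
      _ = q ^ m := one_mul _
  have hkey : (R a - ε) * s ≤ R a * Q K a b := by
    have h3 : ε * δ ≤ ε * s := mul_le_mul_of_nonneg_left hsδ hε.le
    nlinarith
  -- convert back
  have e2 : (Mpow M K a b : ℝ) = lam ^ K * (R a * Q K a b) / R b := by
    simp only [hQdef]
    have hb := (hRpos b).ne'
    have ha := (hRpos a).ne'
    have hl : (lam ^ K) ≠ 0 := (pow_pos hlampos K).ne'
    field_simp
  have e1 : (colsum M K b : ℝ) = lam ^ K * s / R b := by
    rw [hs, colsum]
    push_cast
    have : ∀ c : A, (Mpow M K c b : ℝ) = lam ^ K * (R c * Q K c b) / R b := by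
      intro c
      simp only [hQdef]
      have hb := (hRpos b).ne'
      have hcne := (hRpos c).ne'
      have hl : (lam ^ K) ≠ 0 := (pow_pos hlampos K).ne'
      field_simp
    rw [Finset.sum_congr rfl fun c _ => this c, ← Finset.sum_div, ← Finset.mul_sum]
  rw [e1, e2, mul_div_assoc']
  rw [div_le_div_iff₀ (hRpos b) (hRpos b)]
  have hlK : (0:ℝ) < lam ^ K := pow_pos hlampos K
  nlinarith [mul_le_mul_of_nonneg_right
    (mul_le_mul_of_nonneg_left hkey hlK.le) (hRpos b).le]
end Part5

section Part6
variable [Fintype A] [DecidableEq A]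

lemma extract_eq (x : ℤ → A) (i : ℤ) (n : ℕ) :
    extract x i n = (List.range n).map (fun j : ℕ => x (i + (j:ℤ))) := by
  simp [_root_.extract]
  show List.map (fun j : ℤ => x (i + j)) (List.flatMap (fun a : ℕ => [(a:ℤ)]) (List.range n)) = _
  induction (List.range n) with
  | nil => rfl
  | cons a l ih =>
    simp only [List.flatMap_cons, List.map_append, List.map_cons, ih]
    rfl

lemma extract_length (x : ℤ → A) (i : ℤ) (n : ℕ) : (extract x i n).length = n := by
  simp [extract_eq]

lemma extract_add (x : ℤ → A) (i : ℤ) (m n : ℕ) :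
    extract x i (m + n) = extract x i m ++ extract x (i + m) n := by
  simp only [extract_eq, List.range_add, List.map_append, List.map_map]
  congr 1
  apply List.map_congr_left
  intro j _
  simp only [Function.comp_apply]
  congr 1
  push_cast
  ring

lemma period_mul {x : ℤ → A} {p : ℕ} (hp : HasPeriod x p) :
    ∀ (n : ℕ) (i : ℤ), x (i + (n * p : ℕ)) = x i := by
  intro n
  induction n with
  | zero => intro i; simp
  | succ n ih =>
    intro i
    have h1 : (i + ((n + 1) * p : ℕ) : ℤ) = (i + (n * p : ℕ)) + p := by
      push_cast
      ring
    rw [h1, hp (i + (n * p : ℕ)), ih i]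

lemma extract_block {x : ℤ → A} {p : ℕ} (hp : HasPeriod x p) (n : ℕ) :
    extract x 0 ((n + 1) * p) = extract x 0 (n * p) ++ extract x 0 p := by
  have h1 : (n + 1) * p = n * p + p := by ring
  rw [h1, extract_add x 0 (n * p) p]
  congr 1
  simp only [extract_eq]
  apply List.map_congr_left
  intro j _
  have h2 : (0 + (n * p : ℕ) + j : ℤ) = (0 + j : ℤ) + (n * p : ℕ) := by ring
  rw [h2, period_mul hp n (0 + j)]

lemma count_block {x : ℤ → A} {p : ℕ} (hp : HasPeriod x p) (n : ℕ) (a : A) :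
    (extract x 0 (n * p)).count a = n * (extract x 0 p).count a := by
  induction n with
  | zero => simp [extract_eq]
  | succ n ih =>
    rw [extract_block hp n, List.count_append, ih]
    ring

end Part6

/-- if the subshift of a primitive compatible random substitution
contains a periodic point, then the ℓ¹-normalised right PF eigenvector is
rational and the PF eigenvalue is a positive integer. -/
theorem periodic_implies_rational_integer [Fintype A] [DecidableEq A]
    (θ : A → Set (List A)) (hθ : RandomSubstitution θ)
    (hc : Compatible θ) (hprim : Primitive θ)
    (M : A → A → ℕ) (hM : ∀ b : A, ∀ u ∈ θ b, ∀ a : A, u.count a = M a b)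
    (R : A → ℝ) (hRpos : ∀ a : A, 0 < R a) (hsum : (∑ a : A, R a) = 1)
    (lam : ℝ) (hEig : ∀ a : A, (∑ b : A, (M a b : ℝ) * R b) = lam * R a)
    (hper : ∃ x ∈ Subshift θ, IsPeriodic x) :
    (∀ a : A, ∃ q : ℚ, R a = (q : ℝ)) ∧ ∃ m : ℕ, 0 < m ∧ lam = (m : ℝ) := by
  classical
  obtain ⟨x, hxS, p, hp0, hp⟩ := hper
  have hA : Nonempty A := ⟨x 0⟩
  -- the periodic block and its letter counts
  set u : List A := extract x 0 p with hu
  set v : A → ℕ := fun a => u.count a with hv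
  have hulen : u.length = p := extract_length x 0 p
  have hsumv : (∑ a, v a) = p := by rw [← hulen, length_eq_sum_count u]
  -- λ ≥ 1
  have hM1 : ∀ b : A, 1 ≤ ∑ a, M a b := by
    intro b
    obtain ⟨w, hw⟩ := (hθ b).1
    have hwne : w ≠ [] := (hθ b).2.2 w hw
    have h1 : w.length = ∑ a, M a b := by
      rw [length_eq_sum_count w]
      exact Finset.sum_congr rfl fun a _ => hM b w hw a
    have : 0 < w.length := List.length_pos_iff.mpr hwne
    omega
  have hlam1 : (1:ℝ) ≤ lam := by
    have e : lam = ∑ b, ((∑ a, M a b : ℕ) : ℝ) * R b := by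
      calc lam = lam * ∑ a, R a := by rw [hsum, mul_one]
        _ = ∑ a, lam * R a := by rw [Finset.mul_sum]
        _ = ∑ a, ∑ b, (M a b : ℝ) * R b :=
            Finset.sum_congr rfl fun a _ => (hEig a).symm
        _ = ∑ b, ∑ a, (M a b : ℝ) * R b := Finset.sum_comm
        _ = ∑ b, ((∑ a, M a b : ℕ) : ℝ) * R b := by
            apply Finset.sum_congr rfl
            intro b _
            push_cast
            rw [Finset.sum_mul]
    have h2 : (1:ℝ) = ∑ b, R b := hsum.symm
    have h3 : ∀ b : A, R b ≤ ((∑ a, M a b : ℕ) : ℝ) * R b := by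
      intro b
      have : (1:ℝ) ≤ ((∑ a, M a b : ℕ) : ℝ) := by exact_mod_cast hM1 b
      nlinarith [hRpos b]
    calc (1:ℝ) = ∑ b, R b := h2
      _ ≤ ∑ b, ((∑ a, M a b : ℕ) : ℝ) * R b := Finset.sum_le_sum fun b _ => h3 b
      _ = lam := e.symm
  have hlampos : (0:ℝ) < lam := lt_of_lt_of_le one_pos hlam1
  -- primitivity gives a positive power
  obtain ⟨k0, hk0'⟩ := hprim
  have hk0 : ∀ a b : A, 1 ≤ Mpow M k0 a b := by
    intro a b
    obtain ⟨w, hw, hbw⟩ := hk0' b a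
    have := count_substPow_letter hM k0 b w hw a
    have hpos : 0 < w.count a := List.count_pos_iff.mpr hbw
    omega
  -- lower bound on letter frequencies of the periodic block
  have hlow : ∀ a : A, (p : ℝ) * R a ≤ (v a : ℝ) := by
    intro a
    apply le_of_forall_pos_le_add
    intro η hη
    have hpR : (0:ℝ) < (p : ℝ) := by exact_mod_cast hp0
    set ε : ℝ := η / (2 * p) with hε
    have hεpos : 0 < ε := by positivity
    have hεp : ε * (p:ℝ) = η / 2 := by
      rw [hε]
      field_simp
    obtain ⟨K, hK⟩ := pf_bound M R lam hRpos hsum hEig hlam1 k0 hk0 hεpos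
    set Cr : ℝ := (Cst M K : ℝ) with hCr
    have hCrnn : 0 ≤ Cr := by rw [hCr]; positivity
    have hγ1 : R a - ε ≤ 1 := by
      have : R a ≤ 1 := by
        rw [← hsum]
        exact Finset.single_le_sum (fun c _ => (hRpos c).le) (Finset.mem_univ a)
      linarith
    have hbnd : ∀ n : ℕ,
        (R a - ε) * ((n * p : ℕ) : ℝ) - Cr ≤ ((n * v a : ℕ) : ℝ) := by
      intro n
      have hleg : IsLegal θ (extract x 0 (n * p)) := hxS 0 (n * p)
      have h1 := legal_count_lower hM K a (R a - ε) hγ1 (fun b => hK a b)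
        (extract x 0 (n * p)) hleg
      rw [extract_length x 0 (n * p), count_block hp n a] at h1
      exact_mod_cast h1
    obtain ⟨n, hn⟩ := exists_nat_gt (max 1 (Cr / (η / 2)))
    have hn1 : (1:ℝ) < n := lt_of_le_of_lt (le_max_left _ _) hn
    have hn0 : (0:ℝ) < n := by linarith
    have hCrn : Cr < (n : ℝ) * (η / 2) := by
      have h2 : Cr / (η / 2) < n := lt_of_le_of_lt (le_max_right _ _) hn
      have hη2 : (0:ℝ) < η / 2 := by linarith
      calc Cr = Cr / (η / 2) * (η / 2) := by field_simp
        _ < (n : ℝ) * (η / 2) := by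
            exact mul_lt_mul_of_pos_right h2 hη2
    have key := hbnd n
    have hc1 : ((n * p : ℕ) : ℝ) = (n : ℝ) * (p : ℝ) := by push_cast; ring
    have hc2 : ((n * v a : ℕ) : ℝ) = (n : ℝ) * (v a : ℝ) := by push_cast; ring
    rw [hc1, hc2] at key
    have hεpn : ε * ((n:ℝ) * (p:ℝ)) = (η / 2) * n := by
      calc ε * ((n:ℝ) * (p:ℝ)) = (ε * p) * n := by ring
        _ = (η / 2) * n := by rw [hεp]
    have hgoal : (n : ℝ) * ((p : ℝ) * R a) ≤ (n : ℝ) * ((v a : ℝ) + η) := by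
      nlinarith [key, hCrn, hεpn]
    exact le_of_mul_le_mul_left hgoal hn0
  -- equality of frequencies
  have heq : ∀ a : A, (v a : ℝ) = (p : ℝ) * R a := by
    have hzero : (∑ a, ((v a : ℝ) - (p : ℝ) * R a)) = 0 := by
      rw [Finset.sum_sub_distrib, ← Finset.mul_sum, hsum, mul_one]
      have : (∑ a, (v a : ℝ)) = (p : ℝ) := by exact_mod_cast hsumv
      rw [this]
      ring
    have hnn : ∀ a ∈ Finset.univ, (0:ℝ) ≤ (v a : ℝ) - (p : ℝ) * R a := by
      intro a _
      have := hlow a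
      linarith
    intro a
    have := (Finset.sum_eq_zero_iff_of_nonneg hnn).mp hzero a (Finset.mem_univ a)
    linarith
  have hppos : (0:ℝ) < (p:ℝ) := by exact_mod_cast hp0
  constructor
  · intro a
    refine ⟨(v a : ℚ) / (p : ℚ), ?_⟩
    have := heq a
    have hq : ((((v a : ℚ)) / (p : ℚ) : ℚ) : ℝ) = (v a : ℝ) / (p : ℝ) := by
      push_cast
      ring
    rw [hq, eq_div_iff hppos.ne']
    linarith
  · -- λ is a positive integer
    obtain ⟨a0⟩ := hA
    have hva0R : (0:ℝ) < (v a0 : ℝ) := by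
      rw [heq a0]
      exact mul_pos hppos (hRpos a0)
    have hva0 : 0 < v a0 := by exact_mod_cast hva0R
    set Nk : ℕ → ℕ := fun k => ∑ b, Mpow M k a0 b * v b with hNkdef
    have hNk : ∀ k : ℕ, ((Nk k : ℕ) : ℝ) = lam ^ k * (v a0 : ℝ) := by
      intro k
      have : ((Nk k : ℕ) : ℝ) = ∑ b, (Mpow M k a0 b : ℝ) * (v b : ℝ) := by
        rw [hNkdef]
        push_cast
        rfl
      rw [this]
      calc (∑ b, (Mpow M k a0 b : ℝ) * (v b : ℝ))
          = ∑ b, (Mpow M k a0 b : ℝ) * ((p:ℝ) * R b) :=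
            Finset.sum_congr rfl fun b _ => by rw [heq b]
        _ = (p:ℝ) * ∑ b, (Mpow M k a0 b : ℝ) * R b := by
            rw [Finset.mul_sum]
            apply Finset.sum_congr rfl
            intro b _
            ring
        _ = (p:ℝ) * (lam ^ k * R a0) := by rw [eig_pow M R lam hEig k a0]
        _ = lam ^ k * (v a0 : ℝ) := by rw [heq a0]; ring
    set c : ℚ := (Nk 1 : ℚ) / (v a0 : ℚ) with hcdef
    have hva0Q : ((v a0 : ℚ)) ≠ 0 := by
      have : (0:ℚ) < (v a0 : ℚ) := by exact_mod_cast hva0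
      exact this.ne'
    have hcR : (c : ℝ) = lam := by
      rw [hcdef]
      push_cast
      rw [div_eq_iff hva0R.ne']
      have := hNk 1
      rw [pow_one] at this
      exact_mod_cast this
    have hck : ∀ k : ℕ, c ^ k = (Nk k : ℚ) / (v a0 : ℚ) := by
      intro k
      have hreal : ((c ^ k : ℚ) : ℝ) = (((Nk k : ℚ) / (v a0 : ℚ) : ℚ) : ℝ) := by
        push_cast
        rw [hcR, hNk k, eq_div_iff hva0R.ne']
      exact_mod_cast hreal
    have hdvd : ∀ k : ℕ, c.den ^ k ∣ v a0 := by
      intro k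
      have h1 : c ^ k = Rat.divInt (Nk k : ℤ) (v a0 : ℤ) := by
        rw [Rat.divInt_eq_div, hck k]
        push_cast
        ring
      have h2 : ((c ^ k).den : ℤ) ∣ (v a0 : ℤ) := by
        rw [h1]
        exact Rat.den_dvd _ _
      have h3 : (c ^ k).den = c.den ^ k := Rat.den_pow c k
      rw [h3] at h2
      exact_mod_cast h2
    have hden : c.den = 1 := by
      by_contra hne
      have hge2 : 2 ≤ c.den := by
        have := c.pos
        omega
      have h4 : 2 ^ (v a0) ≤ c.den ^ (v a0) := Nat.pow_le_pow_left hge2 _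
      have h5 : c.den ^ (v a0) ≤ v a0 := Nat.le_of_dvd hva0 (hdvd (v a0))
      have h6 : v a0 < 2 ^ (v a0) := Nat.lt_two_pow_self
      omega
    have hcpos : (0:ℚ) < c := by
      have : (0:ℝ) < (c:ℝ) := by rw [hcR]; exact hlampos
      exact_mod_cast this
    have hnum : c = (c.num : ℚ) := by
      have h8 := Rat.num_div_den c
      rw [hden] at h8
      rw [Nat.cast_one, div_one] at h8
      exact h8.symm
    refine ⟨c.num.toNat, ?_, ?_⟩
    · have : 0 < c.num := Rat.num_pos.mpr hcpos
      omega
    · have h7 : (c.num.toNat : ℤ) = c.num :=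
        Int.toNat_of_nonneg (Rat.num_pos.mpr hcpos).le
      rw [← hcR, hnum, ← h7]
      push_cast
      norm_num
      rw [sup_eq_left.mpr (Rat.num_pos.mpr hcpos).le]
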